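/- The sequence a_n = 2^{−2n−3}·(4n+3)·C_n, where C_n is the n-th Catalan number, satisfies √n·a_n → 1/(2√π) as n → ∞; that is, a_n converges to zero as a power law proportional to n^{−1/2}. -/

import Mathlib

open Filter Real Nat

lemma centralBinom_asymp_eq (n : ℕ) (hn : n ≠ 0) :
    Real.sqrt n * (n.centralBinom : ℝ) / 4 ^ n =
      Stirling.stirlingSeq (2 * n) / (Stirling.stirlingSeq n) ^ 2 := by
  have hfactN : (2 * n)! = n.centralBinom * n ! * n ! := by
    rw [Nat.centralBinom, ← Nat.choose_mul_factorial_mul_factorial (by omega : n ≤ 2 * n),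
      Nat.two_mul, Nat.add_sub_cancel]
  have hfact : ((2 * n)! : ℝ) = (n.centralBinom : ℝ) * n ! * n ! := by exact_mod_cast hfactN
  have hnpos : (0 : ℝ) < n := by exact_mod_cast Nat.pos_of_ne_zero hn
  have hs2 : Real.sqrt (2 * (2 * n : ℕ) : ℝ) = 2 * Real.sqrt n := by
    push_cast
    rw [show (2:ℝ) * (2 * n) = 2 ^ 2 * n by ring, Real.sqrt_mul (by positivity),
      Real.sqrt_sq (by norm_num)]
  have hs1 : Real.sqrt (2 * n : ℝ) ^ 2 = 2 * n := Real.sq_sqrt (by positivity)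
  have hpow : ((2 * n : ℕ) / Real.exp 1 : ℝ) ^ (2 * n) = 4 ^ n * ((n / Real.exp 1) ^ n) ^ 2 := by
    push_cast
    rw [show (2:ℝ) * n / Real.exp 1 = 2 * (n / Real.exp 1) by ring, mul_pow, ← pow_mul,
      mul_comm n 2, pow_mul 2 2 n]
    norm_num
  have hsn : Real.sqrt n ≠ 0 := by positivity
  have hfne : (n ! : ℝ) ≠ 0 := by exact_mod_cast Nat.factorial_ne_zero n
  have hene : ((n:ℝ) / Real.exp 1) ^ n ≠ 0 := by positivity
  unfold Stirling.stirlingSeq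
  rw [hfact, hs2, hpow]
  rw [div_pow (n ! :ℝ), mul_pow, hs1]
  field_simp
  ring_nf
  rw [Real.sq_sqrt hnpos.le]
  ring

/-- The sequence `a_n = 2^{-2n-3}·(4n+3)·C_n` (the exact block probability
`P_n(000)` for rule 14) satisfies `√n · a_n → 1/(2√π)`, i.e. it decays like
`n^{-1/2}`. -/
theorem P000_power_law_decay :
    Tendsto
      (fun n : ℕ =>
        Real.sqrt n *
          ((4 * n + 3) * (catalan n : ℝ) / 2 ^ (2 * n + 3)))
      atTop (nhds (1 / (2 * Real.sqrt Real.pi))) := by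
  have h2n : Tendsto (fun n : ℕ => 2 * n) atTop atTop :=
    tendsto_atTop_atTop.mpr fun b => ⟨b, fun a ha => by omega⟩
  have h1 : Tendsto (fun n : ℕ => Stirling.stirlingSeq (2 * n)) atTop (nhds (Real.sqrt Real.pi)) :=
    Stirling.tendsto_stirlingSeq_sqrt_pi.comp h2n
  have h2 : Tendsto (fun n : ℕ => (Stirling.stirlingSeq n) ^ 2) atTop (nhds Real.pi) := by
    have := Stirling.tendsto_stirlingSeq_sqrt_pi.pow 2
    rwa [Real.sq_sqrt Real.pi_pos.le] at this
  have hb : Tendsto (fun n : ℕ => Real.sqrt n * (n.centralBinom : ℝ) / 4 ^ n) atTop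
      (nhds (1 / Real.sqrt Real.pi)) := by
    have hdiv := h1.div h2 Real.pi_ne_zero
    have heq : Real.sqrt Real.pi / Real.pi = 1 / Real.sqrt Real.pi := by
      rw [div_eq_div_iff Real.pi_ne_zero (Real.sqrt_ne_zero'.mpr Real.pi_pos), one_mul,
        Real.mul_self_sqrt Real.pi_pos.le]
    rw [heq] at hdiv
    refine hdiv.congr' ?_
    filter_upwards [eventually_ge_atTop 1] with n hn
    exact (centralBinom_asymp_eq n (by omega)).symm
  have hc : Tendsto (fun n : ℕ => ((4 * n + 3 : ℝ)) / (8 * (n + 1))) atTop (nhds (1 / 2)) := by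
    have h0 : Tendsto (fun n : ℕ => (1:ℝ)/8 * (1 / (n + 1))) atTop (nhds ((1:ℝ)/8 * 0)) :=
      tendsto_const_nhds.mul tendsto_one_div_add_atTop_nhds_zero_nat
    have := (tendsto_const_nhds (x := (1:ℝ)/2)).sub h0
    simp only [mul_zero, sub_zero] at this
    refine this.congr fun n => ?_
    have hne : (n : ℝ) + 1 ≠ 0 := by positivity
    field_simp
    ring
  have hmul := hc.mul hb
  have hval : (1 / 2 : ℝ) * (1 / Real.sqrt Real.pi) = 1 / (2 * Real.sqrt Real.pi) := by
    rw [_root_.div_mul_div_comm, one_mul]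
  rw [hval] at hmul
  refine hmul.congr fun n => ?_
  have hcat : ((n : ℝ) + 1) * (catalan n : ℝ) = (n.centralBinom : ℝ) := by
    exact_mod_cast congrArg (Nat.cast (R := ℝ)) (succ_mul_catalan_eq_centralBinom n)
  have hne : (n : ℝ) + 1 ≠ 0 := by positivity
  have hpow : (2 : ℝ) ^ (2 * n + 3) = 8 * 4 ^ n := by
    rw [pow_add, pow_mul]
    norm_num [mul_comm]
  rw [hpow, ← hcat]
  field_simp
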